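/- For positive integers k ≥ 2d, the chromatic number of the circular clique G_k^d equals ⌈k/d⌉. -/
import Mathlib


open SimpleGraph Finset

/-- A representation of `G` as intersection graph of boxes in `ℝ^ℓ`
(products of `ℓ` closed bounded intervals). -/
def BoxRep {V : Type*} (G : SimpleGraph V) (ℓ : ℕ) : Prop :=
  ∃ f : V → Fin ℓ → ℝ × ℝ,
    (∀ v i, (f v i).1 ≤ (f v i).2) ∧
    ∀ u v : V, u ≠ v →
      (G.Adj u v ↔ ∀ i, max (f u i).1 (f v i).1 ≤ min (f u i).2 (f v i).2)

/-- The boxicity of a graph: the least positive `ℓ` admitting a box representation. -/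
noncomputable def boxicity {V : Type*} (G : SimpleGraph V) : ℕ :=
  sInf {ℓ : ℕ | 0 < ℓ ∧ BoxRep G ℓ}

/-- A graph is an interval graph iff it has a box representation in dimension 1. -/
def IsIntervalGraph {V : Type*} (G : SimpleGraph V) : Prop := BoxRep G 1

/-- A graph is not complete. -/
def NotComplete {V : Type*} (G : SimpleGraph V) : Prop := ∃ a b : V, a ≠ b ∧ ¬ G.Adj a b

/-- The circular clique `G_k^d`: vertices `a_0, …, a_{k-1}`, with `a_i ~ a_j`
iff `d ≤ |i - j| ≤ k - d`. -/
def circularClique (k d : ℕ) : SimpleGraph (Fin k) :=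
  SimpleGraph.fromRel (fun i j =>
    d ≤ ((i : ℤ) - (j : ℤ)).natAbs ∧ ((i : ℤ) - (j : ℤ)).natAbs ≤ k - d)

/-- The `G`-generalized join `G[H₁, …, Hₙ]`. -/
def genJoin {n : ℕ} {V : Fin n → Type*} (G : SimpleGraph (Fin n))
    (H : ∀ i, SimpleGraph (V i)) : SimpleGraph (Σ i, V i) :=
  SimpleGraph.fromRel (fun x y =>
    G.Adj x.1 y.1 ∨ ∃ h : x.1 = y.1, (H y.1).Adj (h ▸ x.2) y.2)

/-- The join `G ∨ H` of two disjoint graphs. -/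
def graphJoin {α β : Type*} (G : SimpleGraph α) (H : SimpleGraph β) :
    SimpleGraph (α ⊕ β) :=
  SimpleGraph.fromRel (fun x y =>
    match x, y with
    | .inl a, .inl b => G.Adj a b
    | .inr a, .inr b => H.Adj a b
    | _, _ => True)

/-- The equivalence `x ∼ y ↔ N(x) = N(y)` (equal open neighborhoods). -/
def nbhdSetoid {V : Type*} (G : SimpleGraph V) : Setoid V :=
  ⟨fun x y => G.neighborSet x = G.neighborSet y,
    ⟨fun _ => rfl, Eq.symm, Eq.trans⟩⟩

/-- The reduced graph of `G`: vertices are the classes of `nbhdSetoid G`,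
with `[x] ~ [y]` iff `x ~ y` in `G`. -/
def reducedGraph {V : Type*} (G : SimpleGraph V) :
    SimpleGraph (Quotient (nbhdSetoid G)) :=
  SimpleGraph.fromRel (fun a b =>
    ∃ x y : V, Quotient.mk (nbhdSetoid G) x = a ∧ Quotient.mk (nbhdSetoid G) y = b ∧ G.Adj x y)

/-- The zero-divisor graph of a commutative ring: vertices are the nonzero
zero-divisors, with `x ~ y` iff `x * y = 0`. -/
def zeroDivisorGraph (R : Type*) [CommRing R] :
    SimpleGraph {x : R // x ≠ 0 ∧ ∃ y : R, y ≠ 0 ∧ x * y = 0} :=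
  SimpleGraph.fromRel (fun x y => (x : R) * (y : R) = 0)

/-- Equivalence on a ring: equal annihilators. -/
def annSetoid (R : Type*) [CommRing R] : Setoid R :=
  ⟨fun x y => ∀ r : R, x * r = 0 ↔ y * r = 0,
    ⟨fun _ _ => Iff.rfl, fun h r => (h r).symm, fun h h' r => (h r).trans (h' r)⟩⟩

/-- Vertices of the compressed zero-divisor graph: annihilator classes
other than the class of `0` and the class of `1`. -/
def CompressedVertex (R : Type*) [CommRing R] : Type _ :=
  {c : Quotient (annSetoid R) //
    c ≠ Quotient.mk (annSetoid R) 0 ∧ c ≠ Quotient.mk (annSetoid R) 1}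

/-- The compressed zero-divisor graph `Γ_E(R)`. -/
def compressedZDG (R : Type*) [CommRing R] : SimpleGraph (CompressedVertex R) :=
  SimpleGraph.fromRel (fun c c' =>
    ∃ x y : R, Quotient.mk (annSetoid R) x = c.1 ∧ Quotient.mk (annSetoid R) y = c'.1 ∧ x * y = 0)

/-- The graph of proper divisors of `N` (`1 < d < N`), `d ~ d'` iff `N ∣ d * d'`;
this is the compressed zero-divisor graph of `ℤ_N`. -/
def divisorGraph (N : ℕ) : SimpleGraph {d : ℕ // d ∣ N ∧ 1 < d ∧ d < N} :=
  SimpleGraph.fromRel (fun d e => N ∣ d.1 * e.1)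

lemma circularClique_adj {k d : ℕ} (hd : 0 < d) {i j : Fin k} :
    (circularClique k d).Adj i j ↔
      d ≤ ((i.val : ℤ) - (j.val : ℤ)).natAbs ∧ ((i.val : ℤ) - (j.val : ℤ)).natAbs ≤ k - d := by
  simp only [circularClique, fromRel_adj]
  have h1 : ((i : ℤ)) = (i.val : ℤ) := rfl
  have h2 : ((j : ℤ)) = (j.val : ℤ) := rfl
  rw [h1, h2]
  constructor
  · rintro ⟨hne, h | h⟩
    · exact h
    · rw [h1, h2] at h; constructor <;> omega
  · intro h
    refine ⟨fun he => ?_, Or.inl h⟩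
    rw [he] at h
    omega

/-- auxiliary: position of `y` relative to base point `x`, folded into `[0, d)`. -/
def cfun (k d : ℕ) (x y : Fin k) : ℕ :=
  if x.val ≤ y.val then
    (if y.val - x.val < d then y.val - x.val else y.val - x.val - (k - d))
  else
    (if y.val + k - x.val < d then y.val + k - x.val else y.val + k - x.val - (k - d))

lemma cfun_lt {k d : ℕ} (hd : 0 < d) (hkd : 2 * d ≤ k) (x y : Fin k)
    (hn : ¬ (circularClique k d).Adj y x) : cfun k d x y < d := by
  rw [circularClique_adj hd] at hn
  have h1 := y.isLt
  have h2 := x.isLt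
  unfold cfun
  split_ifs <;> omega

lemma cfun_inj {k d : ℕ} (hd : 0 < d) (hkd : 2 * d ≤ k) (x y z : Fin k)
    (hy : ¬ (circularClique k d).Adj y x) (hz : ¬ (circularClique k d).Adj z x)
    (hyz : ¬ (circularClique k d).Adj y z) (h : cfun k d x y = cfun k d x z) : y = z := by
  rw [circularClique_adj hd] at hy hz hyz
  have h1 := y.isLt
  have h2 := x.isLt
  have h3 := z.isLt
  apply Fin.ext
  unfold cfun at h
  split_ifs at h <;> omega

lemma indep_card_le {k d : ℕ} (hd : 0 < d) (hkd : 2 * d ≤ k) (s : Finset (Fin k))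
    (hs : ∀ i ∈ s, ∀ j ∈ s, ¬ (circularClique k d).Adj i j) : s.card ≤ d := by
  rcases s.eq_empty_or_nonempty with rfl | ⟨x, hx⟩
  · simp
  · have := Finset.card_le_card_of_injOn (f := cfun k d x)
      (t := Finset.range d)
      (fun y hy => Finset.mem_range.2 (cfun_lt hd hkd x y (hs y hy x hx)))
      (fun y hy z hz h => cfun_inj hd hkd x y z (hs y hy x hx) (hs z hz x hx) (hs y hy z hz) h)
    simpa using this

lemma colorable_bound {k d n : ℕ} (hd : 0 < d) (hkd : 2 * d ≤ k)
    (hc : (circularClique k d).Colorable n) : k ≤ n * d := by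
  obtain ⟨C⟩ := hc
  have key : ∀ c : Fin n, (Finset.univ.filter (fun i => C i = c)).card ≤ d := by
    intro c
    apply indep_card_le hd hkd
    intro i hi j hj hadj
    simp only [Finset.mem_filter] at hi hj
    exact C.valid hadj (hi.2.trans hj.2.symm)
  have hsum : (Finset.univ : Finset (Fin k)).card
      = ∑ c : Fin n, (Finset.univ.filter (fun i => C i = c)).card :=
    Finset.card_eq_sum_card_fiberwise (fun i _ => Finset.mem_univ _)
  calc k = (Finset.univ : Finset (Fin k)).card := by simp
    _ = ∑ c : Fin n, (Finset.univ.filter (fun i => C i = c)).card := hsum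
    _ ≤ ∑ _c : Fin n, d := Finset.sum_le_sum fun c _ => key c
    _ = n * d := by simp [Finset.sum_const, mul_comm]

/-- For `k ≥ 2d`, `χ(G_k^d) = ⌈k / d⌉`. -/
theorem chromaticNumber_circularClique (k d : ℕ) (hd : 0 < d) (hkd : 2 * d ≤ k) :
    (circularClique k d).chromaticNumber = (((k + d - 1) / d : ℕ) : ℕ∞) := by
  set m := (k + d - 1) / d with hm
  have hmval : m = (k - 1) / d + 1 := by
    rw [hm, show k + d - 1 = (k - 1) + d by omega, Nat.add_div_right _ hd]
  apply le_antisymm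
  · have hcol : (circularClique k d).Colorable m := by
      refine ⟨⟨fun i => ⟨i.val / d, ?_⟩, ?_⟩⟩
      · have : i.val / d ≤ (k - 1) / d := Nat.div_le_div_right (by have := i.isLt; omega)
        omega
      · intro v w hadj hceq
        rw [circularClique_adj hd] at hadj
        have hdv : v.val / d = w.val / d := by
          simpa using congrArg Fin.val hceq
        have hv1 : v.val = d * (w.val / d) + v.val % d := by
          rw [← hdv]; exact (Nat.div_add_mod v.val d).symm
        have hv2 : w.val = d * (w.val / d) + w.val % d := (Nat.div_add_mod w.val d).symm
        have hv3 : v.val % d < d := Nat.mod_lt _ hd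
        have hv4 : w.val % d < d := Nat.mod_lt _ hd
        set t := d * (w.val / d)
        omega
    exact hcol.chromaticNumber_le
  · rw [chromaticNumber_eq_biInf]
    refine le_iInf₂ fun n hn => ?_
    have hk : k ≤ n * d := colorable_bound hd hkd hn
    have hmn : m ≤ n := by
      have h2 : (d - 1 + n * d) / d = n := by
        rw [Nat.add_mul_div_right _ _ hd, Nat.div_eq_of_lt (by omega), Nat.zero_add]
      calc m = (k + d - 1) / d := hm
        _ ≤ (d - 1 + n * d) / d := Nat.div_le_div_right (by omega)
        _ = n := h2
    exact_mod_cast hmn
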